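/- Let X be a paracompact Lindelöf topological space and let (U_ξ : ξ ∈ [0,α]) be a regular transfinite sequence of functionally open subsets of X. Then the set of ordinals ξ ∈ [0,α) for which the set P_ξ = U_ξ \ ⋃_{η<ξ} U_η is nonempty is at most countable. -/

import Mathlib

open Set Topology Metric Filter

universe u

/-- A set is functionally open if it is the preimage of an open set of reals
under a continuous real-valued function. -/
def FunOpen {X : Type*} [TopologicalSpace X] (U : Set X) : Prop :=
  ∃ (g : X → ℝ) (V : Set ℝ), Continuous g ∧ IsOpen V ∧ U = g ⁻¹' V

/-- A set is functionally closed if its complement is functionally open. -/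
def FunClosed {X : Type*} [TopologicalSpace X] (A : Set X) : Prop :=
  FunOpen Aᶜ

/-- A transfinite sequence `(U ξ : ξ ∈ [0, α])` is regular in `X`. -/
def IsRegularSeq {X : Type*} [TopologicalSpace X] (α : Ordinal.{u}) (U : Ordinal → Set X) : Prop :=
  (∀ ξ ≤ α, IsOpen (U ξ)) ∧
  U 0 = ∅ ∧
  U α = Set.univ ∧
  (∀ ξ η : Ordinal, ξ ≤ η → η < α → U ξ ⊆ U η) ∧
  (∀ γ ≤ α, Order.IsSuccLimit γ → U γ = ⋃ ξ < γ, U ξ)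

/-- `f` is functionally `ε`-fragmented: there is a regular sequence of functionally
open sets whose consecutive differences have `f`-image of diameter `< ε`. -/
def FunctionallyEpsFragmented {X Y : Type*} [TopologicalSpace X] [PseudoMetricSpace Y]
    (f : X → Y) (ε : ℝ) : Prop :=
  ∃ (α : Ordinal.{u}) (U : Ordinal → Set X),
    IsRegularSeq α U ∧ (∀ ξ ≤ α, FunOpen (U ξ)) ∧
    ∀ ξ < α, Metric.diam (f '' (U (ξ + 1) \ U ξ)) < ε

/-- An indexed family of sets is discrete: each point has a neighborhood meeting
at most one member of the family. -/
def DiscreteFamily {X ι : Type*} [TopologicalSpace X] (A : ι → Set X) : Prop :=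
  ∀ x : X, ∃ N ∈ 𝓝 x, {i : ι | (N ∩ A i).Nonempty}.Subsingleton

/-- An indexed family is strongly functionally discrete (sfd). -/
def SFDFamily {X ι : Type*} [TopologicalSpace X] (A : ι → Set X) : Prop :=
  ∃ U : ι → Set X, DiscreteFamily U ∧ (∀ i, FunOpen (U i)) ∧ ∀ i, closure (A i) ⊆ U i

/-- A set-indexed family of sets is discrete. -/
def DiscreteSetFamily {X : Type*} [TopologicalSpace X] (𝓐 : Set (Set X)) : Prop :=
  ∀ x : X, ∃ N ∈ 𝓝 x, {A ∈ 𝓐 | (N ∩ A).Nonempty}.Subsingleton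

/-- A family `𝓑` of subsets of `X` is a base for `f : X → Y`. -/
def IsBaseFor {X Y : Type*} [TopologicalSpace Y] (𝓑 : Set (Set X)) (f : X → Y) : Prop :=
  ∀ V : Set Y, IsOpen V → ∃ 𝓑V ⊆ 𝓑, f ⁻¹' V = ⋃₀ 𝓑V

/-- A functionally open (cozero) set in a Lindelöf space is Lindelöf, since it is
a countable union of closed (hence Lindelöf) sets. -/
lemma funOpen_isLindelof {X : Type u} [TopologicalSpace X] [LindelofSpace X] {U : Set X}
    (h : FunOpen U) : IsLindelof U := by
  obtain ⟨g, V, hg, hV, rfl⟩ := h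
  obtain ⟨F, hFc, hFU, hFun, -⟩ := hV.exists_iUnion_isClosed
  have : g ⁻¹' V = ⋃ n, g ⁻¹' (F n) := by rw [← preimage_iUnion, hFun]
  rw [this]
  exact isLindelof_iUnion fun n => ((hFc n).preimage hg).isLindelof

/-- In a paracompact Lindelöf space, a regular sequence of functionally open sets
has only countably many nonempty consecutive differences. -/
theorem statement5 {X : Type u} [TopologicalSpace X] [ParacompactSpace X]
    [LindelofSpace X] (α : Ordinal.{u}) (U : Ordinal.{u} → Set X)
    (hreg : IsRegularSeq α U) (hfo : ∀ ξ ≤ α, FunOpen (U ξ)) :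
    {ξ : Ordinal.{u} | ξ < α ∧ (U ξ \ ⋃ η < ξ, U η).Nonempty}.Countable := by
  obtain ⟨hopen, -, -, -, hlimit⟩ := hreg
  set S : Set Ordinal.{u} := {ξ : Ordinal.{u} | ξ < α ∧ (U ξ \ ⋃ η < ξ, U η).Nonempty} with hS
  by_contra hnc
  set T : Set Ordinal.{u} := {β : Ordinal.{u} | ¬ (S ∩ Iio β).Countable} with hT
  have hαT : α ∈ T := by
    intro h
    have hsub : S ⊆ S ∩ Iio α := fun ξ hξ => ⟨hξ, hξ.1⟩
    exact hnc (h.mono hsub)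
  set γ := sInf T with hγ
  have hγT : γ ∈ T := csInf_mem ⟨α, hαT⟩
  have hγα : γ ≤ α := csInf_le' hαT
  have hmin : ∀ β < γ, (S ∩ Iio β).Countable := by
    intro β hβ
    by_contra h
    have hβT : β ∈ T := h
    exact absurd (csInf_le' hβT) (not_le.2 hβ)
  -- γ is a limit ordinal
  have hlim : Order.IsSuccLimit γ := by
    rcases Ordinal.zero_or_succ_or_isSuccLimit γ with h0' | ⟨β, hβ⟩ | hlim
    · refine absurd ?_ hγT
      have he : S ∩ Iio γ = ∅ := by
        ext ξ
        simp [h0', not_lt_zero]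
      rw [he]
      exact countable_empty
    · exfalso
      apply hγT
      have hβγ : β < γ := hβ ▸ Order.lt_succ β
      have hsub : S ∩ Iio γ ⊆ (S ∩ Iio β) ∪ {β} := by
        intro ξ hξ
        rcases lt_or_eq_of_le (Order.lt_succ_iff.1 (mem_Iio.1 (hβ ▸ hξ.2))) with h | h
        · exact Or.inl ⟨hξ.1, h⟩
        · exact Or.inr (by simp [h])
      exact ((hmin β hβγ).union (countable_singleton β)).mono hsub
    · exact hlim
  have hUγ : U γ = ⋃ ξ < γ, U ξ := hlimit γ hγα hlim
  have hL : IsLindelof (U γ) := funOpen_isLindelof (hfo γ hγα)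
  -- choose for every point of U γ an earlier stage containing it
  have hcov : ∀ x : U γ, ∃ ξ, ξ < γ ∧ (x : X) ∈ U ξ := by
    intro x
    have hx : (x : X) ∈ ⋃ ξ < γ, U ξ := by rw [← hUγ]; exact x.2
    simpa using hx
  choose ξf hξf hxξ using hcov
  obtain ⟨t, htc, hts⟩ := hL.elim_countable_subcover (fun x : U γ => U (ξf x))
    (fun x => hopen _ ((hξf x).le.trans hγα))
    (fun x hx => mem_iUnion.2 ⟨⟨x, hx⟩, hxξ ⟨x, hx⟩⟩)
  -- the union of the countable pieces below the subcover indices is countable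
  have hBc : (⋃ i ∈ t, (S ∩ Iio (ξf i + 1))).Countable := by
    refine htc.biUnion (fun i _ => hmin _ ?_)
    rw [Ordinal.add_one_eq_succ]
    exact hlim.succ_lt (hξf i)
  -- find a stage in S ∩ Iio γ beyond every subcover index
  have hnot : ¬ (S ∩ Iio γ ⊆ ⋃ i ∈ t, (S ∩ Iio (ξf i + 1))) := by
    intro hsub
    exact hγT (hBc.mono hsub)
  obtain ⟨ξ₀, hξ₀, hξ₀n⟩ := not_subset.1 hnot
  obtain ⟨x, hxU, hxn⟩ := hξ₀.1.2
  have hxγ : x ∈ U γ := by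
    rw [hUγ]
    exact mem_iUnion.2 ⟨ξ₀, mem_iUnion.2 ⟨hξ₀.2, hxU⟩⟩
  obtain ⟨i, hit, hxi⟩ := mem_iUnion₂.1 (hts hxγ)
  apply hxn
  have hci : ξf i < ξ₀ := by
    by_contra h
    push_neg at h
    exact hξ₀n (mem_biUnion hit ⟨hξ₀.1, by
      rw [Ordinal.add_one_eq_succ, mem_Iio, Order.lt_succ_iff]; exact h⟩)
  exact mem_iUnion.2 ⟨ξf i, mem_iUnion.2 ⟨hci, hxi⟩⟩
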